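/- For every F₂-linear subspace S of F₂^{2n}, the image under φ of the symplectic dual of S equals the trace dual of the image: φ(S^{⊥s}) = φ(S)^{⊥t}. Consequently, S is totally isotropic (S ⊆ S^{⊥s}) if and only if the additive code φ(S) is trace self-orthogonal (φ(S) ⊆ φ(S)^{⊥t}). -/

import Mathlib

noncomputable section

abbrev F2 : Type := ZMod 2
abbrev F4 : Type := GaloisField 2 2
/-- `F₂^{2n}`, with elements written `(a | b)` for `a b : Fin n → F2`. -/
abbrev V2 (n : ℕ) : Type := (Fin n → F2) × (Fin n → F2)

/-- The symplectic inner product `((a|b), (a'|b'))ₛ = a·b'ᵀ + b·a'ᵀ` on `F₂^{2n}`,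
as an `F₂`-bilinear form. -/
def sympBilin (n : ℕ) : LinearMap.BilinForm F2 (V2 n) :=
  LinearMap.mk₂ F2 (fun u v => ∑ i, (u.1 i * v.2 i + u.2 i * v.1 i))
    (by
      intro m₁ m₂ n
      simp only [Prod.fst_add, Prod.snd_add, Pi.add_apply]
      rw [← Finset.sum_add_distrib]
      exact Finset.sum_congr rfl (by intros; ring))
    (by
      intro c m n
      simp only [Prod.smul_fst, Prod.smul_snd, Pi.smul_apply, smul_eq_mul, Finset.mul_sum]
      exact Finset.sum_congr rfl (by intros; ring))
    (by
      intro m n₁ n₂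
      simp only [Prod.fst_add, Prod.snd_add, Pi.add_apply]
      rw [← Finset.sum_add_distrib]
      exact Finset.sum_congr rfl (by intros; ring))
    (by
      intro c m n
      simp only [Prod.smul_fst, Prod.smul_snd, Pi.smul_apply, smul_eq_mul, Finset.mul_sum]
      exact Finset.sum_congr rfl (by intros; ring))

/-- The symplectic dual `V^{⊥s} = {w | ∀ v ∈ V, (v, w)ₛ = 0}` of a subspace `V ⊆ F₂^{2n}`. -/
def sympDual (n : ℕ) (V : Submodule F2 (V2 n)) : Submodule F2 (V2 n) :=
  (sympBilin n).orthogonal V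

/-- The trace inner product `(u, v)ₜ = Σⱼ (uⱼ vⱼ² + uⱼ² vⱼ)` on `F₄ⁿ`. -/
def trInner {n : ℕ} (u v : Fin n → F4) : F4 :=
  ∑ j, (u j * (v j) ^ 2 + (u j) ^ 2 * v j)

/-- The trace dual `C^{⊥t} = {u ∈ F₄ⁿ | ∀ v ∈ C, (u, v)ₜ = 0}` of a set `C ⊆ F₄ⁿ`,
as an `F₂`-subspace of `F₄ⁿ`. -/
def trDualSub {n : ℕ} (C : Set (Fin n → F4)) : Submodule F2 (Fin n → F4) where
  carrier := {u | ∀ v ∈ C, trInner u v = 0}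
  zero_mem' := by intro v hv; simp [trInner]
  add_mem' := by
    intro a b ha hb v hv
    have h : trInner (a + b) v = trInner a v + trInner b v := by
      simp only [trInner, Pi.add_apply]
      rw [← Finset.sum_add_distrib]
      refine Finset.sum_congr rfl ?_
      intro j _
      have h2 : (2 : F4) = 0 := CharTwo.two_eq_zero
      linear_combination (a j * b j * v j) * h2
    rw [h, ha v hv, hb v hv, add_zero]
  smul_mem' := by
    intro c a ha v hv
    have hc : (algebraMap F2 F4 c) ^ 2 = algebraMap F2 F4 c := by
      have h2 : c ^ 2 = c := by revert c; decide
      rw [← map_pow, h2]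
    have h : trInner (c • a) v = algebraMap F2 F4 c * trInner a v := by
      simp only [trInner, Pi.smul_apply, Algebra.smul_def, Finset.mul_sum]
      refine Finset.sum_congr rfl ?_
      intro j _
      rw [mul_pow, hc]; ring
    rw [h, ha v hv, mul_zero]

/-- The isometry `φ((a|b)) = ω a + ω² b` from `F₂^{2n}` to `F₄ⁿ`. -/
def phi {n : ℕ} (ω : F4) (u : V2 n) : Fin n → F4 :=
  fun i => ω * algebraMap F2 F4 (u.1 i) + ω ^ 2 * algebraMap F2 F4 (u.2 i)

lemma sq_map_F2 (a : F2) : (algebraMap F2 F4 a) ^ 2 = algebraMap F2 F4 a := by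
  rw [← map_pow]; congr 1; revert a; decide

lemma key_trInner {n : ℕ} (ω : F4) (hω : ω ^ 2 + ω + 1 = 0) (u v : V2 n) :
    trInner (phi ω u) (phi ω v) = algebraMap F2 F4 (sympBilin n u v) := by
  have h2 : (2 : F4) = 0 := CharTwo.two_eq_zero
  simp only [trInner, phi, sympBilin, LinearMap.mk₂_apply, map_sum, map_add, map_mul]
  refine Finset.sum_congr rfl ?_
  intro j _
  set A := algebraMap F2 F4 (u.1 j) with hAdef
  set B := algebraMap F2 F4 (u.2 j) with hBdef
  set C := algebraMap F2 F4 (v.1 j) with hCdef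
  set D := algebraMap F2 F4 (v.2 j) with hDdef
  have hA : A ^ 2 = A := sq_map_F2 _
  have hB : B ^ 2 = B := sq_map_F2 _
  have hC : C ^ 2 = C := sq_map_F2 _
  have hD : D ^ 2 = D := sq_map_F2 _
  linear_combination (ω^3*C + ω^4*D) * hA + (ω^5*C + ω^6*D) * hB +
    (ω^3*A + ω^4*B) * hC + (ω^5*A + ω^6*B) * hD +
    (ω^3*A*C + ω^4*A*C*D + ω^5*B*C*D + ω^6*B*D + ω^4*A*B*C + ω^5*A*B*D - A*D - B*C) * h2 +
    (ω^3 - ω + 1)*(A*D + B*C) * hω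

lemma phi_zero_iff (ω : F4) (hω : ω ^ 2 + ω + 1 = 0) (a b : F2)
    (hab : ω * algebraMap F2 F4 a + ω ^ 2 * algebraMap F2 F4 b = 0) : a = 0 ∧ b = 0 := by
  have hωne : ω ≠ 0 := by
    intro h; rw [h] at hω; norm_num at hω
  have hcases : ∀ x : F2, x = 0 ∨ x = 1 := by decide
  rcases hcases a with ha | ha <;> rcases hcases b with hb | hb <;> subst ha <;> subst hb
  · exact ⟨rfl, rfl⟩
  · exfalso; simp only [map_zero, map_one, mul_zero, mul_one, zero_add] at hab
    exact hωne (pow_eq_zero_iff (n := 2) (by norm_num) |>.mp hab)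
  · exfalso; simp only [map_zero, map_one, mul_zero, mul_one, add_zero] at hab
    exact hωne hab
  · exfalso; simp only [map_one, mul_one] at hab
    exact one_ne_zero (α := F4) (by linear_combination hω - hab)

lemma phi_injective {n : ℕ} (ω : F4) (hω : ω ^ 2 + ω + 1 = 0) :
    Function.Injective (phi (n := n) ω) := by
  intro u v huv
  have hdiff : ∀ i, u.1 i - v.1 i = 0 ∧ u.2 i - v.2 i = 0 := by
    intro i
    apply phi_zero_iff ω hω
    have h := congrFun huv i
    simp only [phi] at h
    rw [map_sub, map_sub]
    ring_nf
    linear_combination h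
  have h1 : u.1 = v.1 := funext fun i => sub_eq_zero.mp (hdiff i).1
  have h2 : u.2 = v.2 := funext fun i => sub_eq_zero.mp (hdiff i).2
  exact Prod.ext h1 h2

lemma phi_surj_coord (ω : F4) (hω : ω ^ 2 + ω + 1 = 0) (x : F4) :
    ∃ a b : F2, x = ω * algebraMap F2 F4 a + ω ^ 2 * algebraMap F2 F4 b := by
  set g : F2 × F2 → F4 := fun p => ω * algebraMap F2 F4 p.1 + ω ^ 2 * algebraMap F2 F4 p.2
  have hinj : Function.Injective g := by
    intro p q hpq
    have : ω * algebraMap F2 F4 (p.1 - q.1) + ω ^ 2 * algebraMap F2 F4 (p.2 - q.2) = 0 := by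
      rw [map_sub, map_sub]; simp only [g] at hpq; linear_combination hpq
    obtain ⟨h1, h2⟩ := phi_zero_iff ω hω _ _ this
    exact Prod.ext (sub_eq_zero.mp h1) (sub_eq_zero.mp h2)
  have hcard : Nat.card (F2 × F2) = Nat.card F4 := by
    rw [Nat.card_prod, Nat.card_zmod, GaloisField.card 2 2 (by norm_num)]
    norm_num
  have hbij : Function.Bijective g :=
    (Nat.bijective_iff_injective_and_card g).mpr ⟨hinj, hcard⟩
  obtain ⟨⟨a, b⟩, hab⟩ := hbij.2 x
  exact ⟨a, b, hab.symm⟩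

lemma phi_surjective {n : ℕ} (ω : F4) (hω : ω ^ 2 + ω + 1 = 0) :
    Function.Surjective (phi (n := n) ω) := by
  intro x
  choose a b hab using fun i => phi_surj_coord ω hω (x i)
  exact ⟨(a, b), funext fun i => (hab i).symm⟩

lemma sympBilin_symm {n : ℕ} (u v : V2 n) : sympBilin n u v = sympBilin n v u := by
  simp only [sympBilin, LinearMap.mk₂_apply]
  exact Finset.sum_congr rfl (by intros; ring)

/-- for every `F₂`-subspace `S ⊆ F₂^{2n}`, `φ(S^{⊥s}) = φ(S)^{⊥t}`;
consequently `S` is totally isotropic iff `φ(S)` is trace self-orthogonal. -/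
theorem stmt4 (n : ℕ) (ω : F4) (hω : ω ^ 2 + ω + 1 = 0) (S : Submodule F2 (V2 n)) :
    phi ω '' (sympDual n S : Set (V2 n)) =
      (trDualSub (phi ω '' (S : Set (V2 n))) : Set (Fin n → F4)) ∧
    (S ≤ sympDual n S ↔
      phi ω '' (S : Set (V2 n)) ⊆ (trDualSub (phi ω '' (S : Set (V2 n))) : Set (Fin n → F4))) := by
  have hkey : ∀ u v : V2 n, trInner (phi ω u) (phi ω v) = 0 ↔ sympBilin n u v = 0 := by
    intro u v
    rw [key_trInner ω hω]
    constructor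
    · intro h
      exact (algebraMap F2 F4).injective (by rw [h, map_zero])
    · intro h; rw [h, map_zero]
  have hmain : phi ω '' (sympDual n S : Set (V2 n)) =
      (trDualSub (phi ω '' (S : Set (V2 n))) : Set (Fin n → F4)) := by
    ext x
    constructor
    · rintro ⟨u, hu, rfl⟩
      show ∀ v ∈ phi ω '' (S : Set (V2 n)), trInner (phi ω u) v = 0
      rintro v ⟨w, hw, rfl⟩
      refine (hkey u w).mpr ?_
      rw [sympBilin_symm]
      exact hu w hw
    · intro hx
      obtain ⟨u, rfl⟩ := phi_surjective ω hω x
      refine ⟨u, ?_, rfl⟩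
      intro w hw
      show sympBilin n w u = 0
      rw [sympBilin_symm]
      exact (hkey u w).mp (hx (phi ω w) ⟨w, hw, rfl⟩)
  refine ⟨hmain, ?_, ?_⟩
  · intro hle
    rw [← hmain]
    exact Set.image_mono (fun x hx => hle hx)
  · intro hsub u hu
    rw [← hmain] at hsub
    obtain ⟨w, hw, heq⟩ := hsub ⟨u, hu, rfl⟩
    rwa [phi_injective ω hω heq] at hw
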